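/- arXiv:2205.14056 — 3 statements merged into one kernel-verified Lean document; each statement's English description precedes it below -/
import Mathlib

section
/- Subdifferential of the nuclear norm (Watson), membership direction: let d, p be positive integers, r ≤ min(d,p), and let U₁ ∈ ℝ^{d×r}, U₂ ∈ ℝ^{d×(d−r)}, V₁ ∈ ℝ^{p×r}, V₂ ∈ ℝ^{p×(p−r)} satisfy U₁ᵀU₁ = I_r, U₂ᵀU₂ = I_{d−r}, U₁ᵀU₂ = 0, U₁U₁ᵀ + U₂U₂ᵀ = I_d, V₁ᵀV₁ = I_r, V₂ᵀV₂ = I_{p−r}, V₁ᵀV₂ = 0, V₁V₁ᵀ + V₂V₂ᵀ = I_p. Let D₁ ∈ ℝ^{r×r} be diagonal with nonnegative diagonal entries and set A = U₁D₁V₁ᵀ. Then for every E ∈ ℝ^{(d−r)×(p−r)} with spectral norm ‖E‖₂ ≤ 1, the matrix G = U₁V₁ᵀ + U₂EV₂ᵀ is a subgradient of the nuclear norm at A: for every B ∈ ℝ^{d×p}, ‖B‖_* ≥ ‖A‖_* + Tr(Gᵀ(B − A)). -/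
open Matrix

/-- The spectral norm (ℓ²→ℓ² operator norm, largest singular value) of a real matrix. -/
noncomputable def matrixSpectralNorm {m n : Type*} [Fintype m] [Fintype n] [DecidableEq n]
    (M : Matrix m n ℝ) : ℝ :=
  ‖LinearMap.toContinuousLinearMap (Matrix.toEuclideanLin M)‖

theorem isHermitian_transpose_mul_self_real {m n : Type*} [Fintype m] [Fintype n]
    (M : Matrix m n ℝ) : (Mᵀ * M).IsHermitian := by
  rw [← Matrix.conjTranspose_eq_transpose_of_trivial]
  exact Matrix.isHermitian_conjTranspose_mul_self M

/-- The nuclear norm of a real matrix: the sum of the square roots of the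
eigenvalues of `Mᵀ * M`, i.e. the sum of the singular values of `M`. -/
noncomputable def nuclearNorm {m n : Type*} [Fintype m] [Fintype n] [DecidableEq n]
    (M : Matrix m n ℝ) : ℝ :=
  ∑ i, Real.sqrt ((isHermitian_transpose_mul_self_real M).eigenvalues i)

/-- The largest (real) eigenvalue of a real square matrix, as the supremum of its
real spectrum.  For a symmetric matrix this is its largest eigenvalue. -/
noncomputable def lamMax {n : Type*} [Fintype n] [DecidableEq n] (S : Matrix n n ℝ) : ℝ :=
  sSup (spectrum ℝ S)

/- ======================= Auxiliary lemmas ======================= -/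

private lemma dot_sq_eq {a b : Type*} [Fintype a] [Fintype b]
    (M : Matrix a b ℝ) (x : b → ℝ) :
    ((Mᵀ * M) *ᵥ x) ⬝ᵥ x = (M *ᵥ x) ⬝ᵥ (M *ᵥ x) := by
  rw [← Matrix.mulVec_mulVec, Matrix.mulVec_transpose, ← Matrix.dotProduct_mulVec]

private lemma dot_cs {a : Type*} [Fintype a] (u v : a → ℝ) :
    u ⬝ᵥ v ≤ Real.sqrt (u ⬝ᵥ u) * Real.sqrt (v ⬝ᵥ v) := by
  have h := Finset.sum_mul_sq_le_sq_mul_sq Finset.univ u v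
  calc u ⬝ᵥ v ≤ |∑ i, u i * v i| := le_abs_self _
    _ = Real.sqrt ((∑ i, u i * v i) ^ 2) := (Real.sqrt_sq_eq_abs _).symm
    _ ≤ Real.sqrt ((∑ i, u i ^ 2) * (∑ i, v i ^ 2)) := Real.sqrt_le_sqrt h
    _ = Real.sqrt (u ⬝ᵥ u) * Real.sqrt (v ⬝ᵥ v) := by
        rw [Real.sqrt_mul (by positivity)]
        simp [dotProduct, pow_two]

private lemma euclid_norm_sq {a : Type*} [Fintype a] (z : EuclideanSpace ℝ a) :
    ‖z‖ ^ 2 = (fun i => z i) ⬝ᵥ (fun i => z i) := by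
  rw [← real_inner_self_eq_norm_sq]
  simp [PiLp.inner_apply, dotProduct]
  rw [EuclideanSpace.real_norm_sq_eq]
  simp [pow_two]

private lemma contraction_of_spectralNorm {m n : Type*} [Fintype m] [Fintype n] [DecidableEq n]
    (M : Matrix m n ℝ) (hM : matrixSpectralNorm M ≤ 1) (x : n → ℝ) :
    (M *ᵥ x) ⬝ᵥ (M *ᵥ x) ≤ x ⬝ᵥ x := by
  set y : EuclideanSpace ℝ n := (WithLp.equiv 2 _).symm x with hy
  have h1 : ‖(Matrix.toEuclideanLin M) y‖ ≤ ‖y‖ := by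
    calc ‖(Matrix.toEuclideanLin M) y‖
        = ‖(LinearMap.toContinuousLinearMap (Matrix.toEuclideanLin M)) y‖ := rfl
      _ ≤ matrixSpectralNorm M * ‖y‖ := ContinuousLinearMap.le_opNorm _ _
      _ ≤ 1 * ‖y‖ := mul_le_mul_of_nonneg_right hM (norm_nonneg _)
      _ = ‖y‖ := one_mul _
  have h2 : ‖(Matrix.toEuclideanLin M) y‖ ^ 2 ≤ ‖y‖ ^ 2 := by
    exact pow_le_pow_left₀ (norm_nonneg _) h1 2
  have h3 : ‖(Matrix.toEuclideanLin M) y‖ ^ 2 = (M *ᵥ x) ⬝ᵥ (M *ᵥ x) := by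
    rw [euclid_norm_sq]
    have : (fun i => (Matrix.toEuclideanLin M) y i) = M *ᵥ x := by
      funext i
      rw [Matrix.toEuclideanLin_apply]
      rfl
    rw [this]
  have h4 : ‖y‖ ^ 2 = x ⬝ᵥ x := by
    rw [euclid_norm_sq]
    rfl
  rw [← h3, ← h4]; exact h2

private lemma entry_eq_dot {a b : Type*} [Fintype a] [Fintype b]
    (X Y : Matrix a b ℝ) (i : b) :
    (Xᵀ * Y) i i = (fun k => X k i) ⬝ᵥ (fun k => Y k i) := by
  simp [Matrix.mul_apply, dotProduct]

private lemma mul_col {a b c : Type*} [Fintype b]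
    (X : Matrix a b ℝ) (W : Matrix b c ℝ) (i : c) :
    (fun k => (X * W) k i) = X *ᵥ (fun k => W k i) := by
  funext k
  simp [Matrix.mul_apply, Matrix.mulVec, dotProduct]

open scoped MatrixOrder in
/-- Trace of the PSD square root is the sum of square roots of the eigenvalues. -/
private lemma trace_sqrt {n : Type*} [Fintype n] [DecidableEq n] {S : Matrix n n ℝ}
    (hS : S.PosSemidef) :
    (CFC.sqrt S).trace = ∑ i, Real.sqrt (hS.1.eigenvalues i) := by
  rw [CFC.sqrt_eq_cfc, cfc_nnreal_eq_real _ S, hS.1.cfc_eq, IsHermitian.cfc,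
    Unitary.conjStarAlgAut_apply, Matrix.trace_mul_cycle]
  rw [Unitary.coe_star_mul_self, one_mul]
  simp [Matrix.trace_diagonal]
  refine Finset.sum_congr rfl fun i _ => ?_
  simp [hS.eigenvalues_nonneg i]

/-- Duality: for a contraction `G`, `Tr(Gᵀ B) ≤ ‖B‖_*`. -/
private lemma trace_le_nuclear {d' p' : Type*} [Fintype d'] [Fintype p'] [DecidableEq p']
    (G B : Matrix d' p' ℝ)
    (hG : ∀ x : p' → ℝ, (G *ᵥ x) ⬝ᵥ (G *ᵥ x) ≤ x ⬝ᵥ x) :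
    (Gᵀ * B).trace ≤ nuclearNorm B := by
  have hS := isHermitian_transpose_mul_self_real B
  set W : Matrix p' p' ℝ := (Matrix.IsHermitian.eigenvectorUnitary hS : Matrix p' p' ℝ)
    with hWdef
  have hWmem : W ∈ Matrix.unitaryGroup p' ℝ := (Matrix.IsHermitian.eigenvectorUnitary hS).2
  have hsW : star W = Wᵀ := by
    rw [Matrix.star_eq_conjTranspose, Matrix.conjTranspose_eq_transpose_of_trivial]
  have hWWt : W * Wᵀ = 1 := by
    rw [← hsW]; exact (Matrix.mem_unitaryGroup_iff).mp hWmem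
  have hWtW : Wᵀ * W = 1 := by
    rw [← hsW]; exact (Matrix.mem_unitaryGroup_iff').mp hWmem
  have hdiag : Wᵀ * (Bᵀ * B) * W = Matrix.diagonal hS.eigenvalues := by
    have h := hS.conjStarAlgAut_star_eigenvectorUnitary
    simp only [Unitary.conjStarAlgAut_apply, Unitary.coe_star, star_star] at h
    rw [hsW] at h
    simpa using h
  -- columns of W are unit vectors
  have hcol1 : ∀ i, (fun k => W k i) ⬝ᵥ (fun k => W k i) = 1 := by
    intro i
    have h : (Wᵀ * W) i i = (1 : Matrix p' p' ℝ) i i := by rw [hWtW]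
    rw [entry_eq_dot] at h
    simpa using h
  have hBW : (B * W)ᵀ * (B * W) = Matrix.diagonal hS.eigenvalues := by
    rw [← hdiag, Matrix.transpose_mul]
    simp only [Matrix.mul_assoc]
  have hBcol : ∀ i, (B *ᵥ fun k => W k i) ⬝ᵥ (B *ᵥ fun k => W k i) = hS.eigenvalues i := by
    intro i
    have h := congrFun (congrFun hBW i) i
    rw [entry_eq_dot, mul_col] at h
    simpa using h
  -- trace invariance
  have htr : (Gᵀ * B).trace = ((G * W)ᵀ * (B * W)).trace := by
    have h1 : (G * W)ᵀ * (B * W) = (Wᵀ * (Gᵀ * B)) * W := by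
      rw [Matrix.transpose_mul]
      simp only [Matrix.mul_assoc]
    rw [h1, Matrix.trace_mul_comm (Wᵀ * (Gᵀ * B)) W, ← Matrix.mul_assoc, hWWt,
      Matrix.one_mul]
  rw [htr, Matrix.trace]
  have hle : ∀ i, ((G * W)ᵀ * (B * W)).diag i ≤ Real.sqrt (hS.eigenvalues i) := by
    intro i
    have h : ((G * W)ᵀ * (B * W)) i i
        = (G *ᵥ fun k => W k i) ⬝ᵥ (B *ᵥ fun k => W k i) := by
      rw [entry_eq_dot, mul_col, mul_col]
    rw [Matrix.diag, h]
    calc (G *ᵥ fun k => W k i) ⬝ᵥ (B *ᵥ fun k => W k i)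
        ≤ Real.sqrt ((G *ᵥ fun k => W k i) ⬝ᵥ (G *ᵥ fun k => W k i)) *
          Real.sqrt ((B *ᵥ fun k => W k i) ⬝ᵥ (B *ᵥ fun k => W k i)) := dot_cs _ _
      _ ≤ Real.sqrt ((fun k => W k i) ⬝ᵥ (fun k => W k i)) *
          Real.sqrt (hS.eigenvalues i) := by
          rw [hBcol i]
          exact mul_le_mul_of_nonneg_right (Real.sqrt_le_sqrt (hG _)) (Real.sqrt_nonneg _)
      _ = Real.sqrt (hS.eigenvalues i) := by rw [hcol1 i, Real.sqrt_one, one_mul]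
  exact Finset.sum_le_sum fun i _ => hle i

/-- Watson's subdifferential of the nuclear norm, membership direction:
with `A = U₁D₁V₁ᵀ` and `‖E‖₂ ≤ 1`, the matrix `G = U₁V₁ᵀ + U₂EV₂ᵀ` is a subgradient
of the nuclear norm at `A`. -/
theorem nuclearNorm_subgradient (d p r : ℕ) (hd : 0 < d) (hp : 0 < p)
    (hr : r ≤ min d p)
    (U₁ : Matrix (Fin d) (Fin r) ℝ) (U₂ : Matrix (Fin d) (Fin (d - r)) ℝ)
    (V₁ : Matrix (Fin p) (Fin r) ℝ) (V₂ : Matrix (Fin p) (Fin (p - r)) ℝ)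
    (hU₁ : U₁ᵀ * U₁ = 1) (hU₂ : U₂ᵀ * U₂ = 1) (hU₁₂ : U₁ᵀ * U₂ = 0)
    (hUfull : U₁ * U₁ᵀ + U₂ * U₂ᵀ = 1)
    (hV₁ : V₁ᵀ * V₁ = 1) (hV₂ : V₂ᵀ * V₂ = 1) (hV₁₂ : V₁ᵀ * V₂ = 0)
    (hVfull : V₁ * V₁ᵀ + V₂ * V₂ᵀ = 1)
    (D : Fin r → ℝ) (hD : ∀ i, 0 ≤ D i)
    (E : Matrix (Fin (d - r)) (Fin (p - r)) ℝ) (hE : matrixSpectralNorm E ≤ 1) :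
    ∀ B : Matrix (Fin d) (Fin p) ℝ,
      nuclearNorm B ≥
        nuclearNorm (U₁ * Matrix.diagonal D * V₁ᵀ) +
          ((U₁ * V₁ᵀ + U₂ * E * V₂ᵀ)ᵀ * (B - U₁ * Matrix.diagonal D * V₁ᵀ)).trace := by
  intro B
  set G : Matrix (Fin d) (Fin p) ℝ := U₁ * V₁ᵀ + U₂ * E * V₂ᵀ with hGdef
  set A : Matrix (Fin d) (Fin p) ℝ := U₁ * Matrix.diagonal D * V₁ᵀ with hAdef
  have hU₂₁ : U₂ᵀ * U₁ = 0 := by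
    have h := congrArg Matrix.transpose hU₁₂
    simpa using h
  -- helper rewrite rules
  have hU₁' : ∀ {k : Type} [Fintype k] (X : Matrix (Fin r) k ℝ),
      U₁ᵀ * (U₁ * X) = X := fun X => by rw [← Matrix.mul_assoc, hU₁, Matrix.one_mul]
  have hU₂' : ∀ {k : Type} [Fintype k] (X : Matrix (Fin (d - r)) k ℝ),
      U₂ᵀ * (U₂ * X) = X := fun X => by rw [← Matrix.mul_assoc, hU₂, Matrix.one_mul]
  have hU₁₂' : ∀ {k : Type} [Fintype k] (X : Matrix (Fin (d - r)) k ℝ),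
      U₁ᵀ * (U₂ * X) = 0 := fun X => by rw [← Matrix.mul_assoc, hU₁₂, Matrix.zero_mul]
  have hU₂₁' : ∀ {k : Type} [Fintype k] (X : Matrix (Fin r) k ℝ),
      U₂ᵀ * (U₁ * X) = 0 := fun X => by rw [← Matrix.mul_assoc, hU₂₁, Matrix.zero_mul]
  have hV₁' : ∀ {k : Type} [Fintype k] (X : Matrix (Fin r) k ℝ),
      V₁ᵀ * (V₁ * X) = X := fun X => by rw [← Matrix.mul_assoc, hV₁, Matrix.one_mul]
  -- GᵀG
  have hGtG : Gᵀ * G = (V₁ᵀ)ᵀ * V₁ᵀ + (E * V₂ᵀ)ᵀ * (E * V₂ᵀ) := by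
    rw [hGdef]
    simp only [Matrix.transpose_add, Matrix.transpose_mul, Matrix.transpose_transpose,
      Matrix.add_mul, Matrix.mul_add, Matrix.mul_assoc, hU₁', hU₂', hU₁₂', hU₂₁',
      Matrix.mul_zero, Matrix.zero_mul, add_zero, zero_add]
  -- G is a contraction
  have hGcon : ∀ x : Fin p → ℝ, (G *ᵥ x) ⬝ᵥ (G *ᵥ x) ≤ x ⬝ᵥ x := by
    intro x
    have h1 : (G *ᵥ x) ⬝ᵥ (G *ᵥ x)
        = (V₁ᵀ *ᵥ x) ⬝ᵥ (V₁ᵀ *ᵥ x) + ((E * V₂ᵀ) *ᵥ x) ⬝ᵥ ((E * V₂ᵀ) *ᵥ x) := by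
      rw [← dot_sq_eq, hGtG, Matrix.add_mulVec, add_dotProduct,
        dot_sq_eq, dot_sq_eq]
    have h2 : ((E * V₂ᵀ) *ᵥ x) ⬝ᵥ ((E * V₂ᵀ) *ᵥ x) ≤ (V₂ᵀ *ᵥ x) ⬝ᵥ (V₂ᵀ *ᵥ x) := by
      rw [← Matrix.mulVec_mulVec]
      exact contraction_of_spectralNorm E hE _
    have h3 : (V₁ᵀ *ᵥ x) ⬝ᵥ (V₁ᵀ *ᵥ x) + (V₂ᵀ *ᵥ x) ⬝ᵥ (V₂ᵀ *ᵥ x) = x ⬝ᵥ x := by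
      rw [← dot_sq_eq V₁ᵀ, ← dot_sq_eq V₂ᵀ, ← add_dotProduct, ← Matrix.add_mulVec]
      simp only [Matrix.transpose_transpose]
      rw [hVfull, Matrix.one_mulVec]
    calc (G *ᵥ x) ⬝ᵥ (G *ᵥ x)
        = (V₁ᵀ *ᵥ x) ⬝ᵥ (V₁ᵀ *ᵥ x) + ((E * V₂ᵀ) *ᵥ x) ⬝ᵥ ((E * V₂ᵀ) *ᵥ x) := h1
      _ ≤ (V₁ᵀ *ᵥ x) ⬝ᵥ (V₁ᵀ *ᵥ x) + (V₂ᵀ *ᵥ x) ⬝ᵥ (V₂ᵀ *ᵥ x) := by linarith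
      _ = x ⬝ᵥ x := h3
  -- Tr(Gᵀ A) = ∑ D
  have hGtA : Gᵀ * A = V₁ * (Matrix.diagonal D * V₁ᵀ) := by
    rw [hGdef, hAdef]
    simp only [Matrix.transpose_add, Matrix.transpose_mul, Matrix.transpose_transpose,
      Matrix.add_mul, Matrix.mul_add, Matrix.mul_assoc, hU₁', hU₂', hU₁₂', hU₂₁',
      Matrix.mul_zero, Matrix.zero_mul, add_zero, zero_add]
  have htrGA : (Gᵀ * A).trace = ∑ i, D i := by
    rw [hGtA, Matrix.trace_mul_comm, Matrix.mul_assoc, hV₁,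
      Matrix.mul_one, Matrix.trace_diagonal]
  -- nuclearNorm A = ∑ D
  have hSA : (Aᵀ * A).PosSemidef := by
    rw [← Matrix.conjTranspose_eq_transpose_of_trivial]
    exact Matrix.posSemidef_conjTranspose_mul_self A
  set N : Matrix (Fin p) (Fin p) ℝ := V₁ * (Matrix.diagonal D * V₁ᵀ) with hNdef
  have hNps : N.PosSemidef := by
    have h := (Matrix.posSemidef_diagonal_iff.mpr hD).mul_mul_conjTranspose_same V₁
    rw [Matrix.conjTranspose_eq_transpose_of_trivial, Matrix.mul_assoc] at h
    exact h
  have hNsq : N ^ 2 = Aᵀ * A := by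
    rw [pow_two, hNdef, hAdef]
    simp only [Matrix.transpose_mul, Matrix.transpose_transpose,
      Matrix.diagonal_transpose, Matrix.mul_assoc, hU₁', hV₁']
  open scoped MatrixOrder in
  have hNsqrt : N = CFC.sqrt (Aᵀ * A) :=
    ((CFC.sqrt_eq_iff _ _ hSA.nonneg hNps.nonneg).mpr (by rw [← pow_two]; exact hNsq)).symm
  have htrN : N.trace = ∑ i, D i := by
    rw [hNdef, Matrix.trace_mul_comm, Matrix.mul_assoc, hV₁, Matrix.mul_one,
      Matrix.trace_diagonal]
  have hnucA : nuclearNorm A = ∑ i, D i := by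
    have h1 : nuclearNorm A = ∑ i, Real.sqrt (hSA.1.eigenvalues i) := rfl
    rw [h1, ← trace_sqrt hSA, ← hNsqrt, htrN]
  -- conclusion
  have hmain : (Gᵀ * B).trace ≤ nuclearNorm B := trace_le_nuclear G B hGcon
  have hsplit : (Gᵀ * (B - A)).trace = (Gᵀ * B).trace - (Gᵀ * A).trace := by
    rw [Matrix.mul_sub, Matrix.trace_sub]
  rw [ge_iff_le, hsplit, hnucA, htrGA]
  linarith
end

section
/- Linear weight recovery (core of Theorem 3): let p = r + s, let V₁ ∈ ℝ^{p×r} and V₂ ∈ ℝ^{p×s} satisfy V₁ᵀV₁ = I_r, V₂ᵀV₂ = I_s, and V₁ᵀV₂ = 0, and let E ∈ ℝ^{t×s} have spectral norm ‖E‖₂ < 1. Set S = V₁V₁ᵀ + V₂EᵀEV₂ᵀ ∈ ℝ^{p×p}. Then for every vector v ∈ ℝᵖ, Sv = v if and only if v lies in the column space of V₁ (i.e., v = V₁w for some w ∈ ℝʳ). Hence the eigenspace of S for the eigenvalue 1 is exactly the column span of V₁. -/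
open Matrix

lemma euclidean_norm_sq_eq_dot {n : ℕ} (z : Fin n → ℝ) :
    ‖(WithLp.equiv 2 (Fin n → ℝ)).symm z‖ ^ 2 = z ⬝ᵥ z := by
  rw [EuclideanSpace.norm_eq, Real.sq_sqrt (by positivity)]
  simp [dotProduct, Real.norm_eq_abs, sq_abs, pow_two]

lemma contract_fixed {t s : ℕ} (E : Matrix (Fin t) (Fin s) ℝ) (hE : matrixSpectralNorm E < 1)
    (x : Fin s → ℝ) (hx : (Eᵀ * E) *ᵥ x = x) : x = 0 := by
  by_contra hx0
  have hnn : 0 ≤ x ⬝ᵥ x := by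
    simpa [dotProduct] using Finset.sum_nonneg fun i _ => mul_self_nonneg (x i)
  have hdpos : 0 < x ⬝ᵥ x := by
    rcases lt_or_eq_of_le hnn with h | h
    · exact h
    · exact absurd ((dotProduct_self_eq_zero).mp h.symm) hx0
  have h1 : x ⬝ᵥ x = (E *ᵥ x) ⬝ᵥ (E *ᵥ x) := by
    nth_rewrite 2 [← hx]
    rw [← Matrix.mulVec_mulVec, Matrix.dotProduct_mulVec, Matrix.vecMul_transpose]
  set y : EuclideanSpace ℝ (Fin s) := (WithLp.equiv 2 (Fin s → ℝ)).symm x with hy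
  have hle : ‖(WithLp.equiv 2 (Fin t → ℝ)).symm (E *ᵥ x)‖ ≤ matrixSpectralNorm E * ‖y‖ := by
    have := (LinearMap.toContinuousLinearMap (Matrix.toEuclideanLin E)).le_opNorm y
    simpa [Matrix.toEuclideanLin_apply, hy, matrixSpectralNorm] using this
  have hc0 : 0 ≤ matrixSpectralNorm E := norm_nonneg _
  have h2 : (E *ᵥ x) ⬝ᵥ (E *ᵥ x) ≤ matrixSpectralNorm E ^ 2 * (x ⬝ᵥ x) := by
    have := euclidean_norm_sq_eq_dot (E *ᵥ x)
    have hyx := euclidean_norm_sq_eq_dot x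
    nlinarith [norm_nonneg ((WithLp.equiv 2 (Fin t → ℝ)).symm (E *ᵥ x)), norm_nonneg y]
  have hfac : 0 < (1 - matrixSpectralNorm E) * (1 + matrixSpectralNorm E) :=
    mul_pos (by linarith) (by linarith)
  nlinarith [h1, h2, hdpos, hfac]

/-- linear weight recovery: with `p = r + s`, `V₁ᵀV₁ = I`, `V₂ᵀV₂ = I`,
`V₁ᵀV₂ = 0`, and `‖E‖₂ < 1`, set `S = V₁V₁ᵀ + V₂EᵀEV₂ᵀ`.  Then `Sv = v` iff `v` lies
in the column space of `V₁`; the eigenspace of `S` for eigenvalue 1 is the column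
span of `V₁`. -/
theorem linear_weight_recovery (r s t : ℕ)
    (V₁ : Matrix (Fin (r + s)) (Fin r) ℝ) (V₂ : Matrix (Fin (r + s)) (Fin s) ℝ)
    (hV₁ : V₁ᵀ * V₁ = 1) (hV₂ : V₂ᵀ * V₂ = 1) (hV₁₂ : V₁ᵀ * V₂ = 0)
    (E : Matrix (Fin t) (Fin s) ℝ) (hE : matrixSpectralNorm E < 1) :
    ∀ v : Fin (r + s) → ℝ,
      (V₁ * V₁ᵀ + V₂ * Eᵀ * E * V₂ᵀ).mulVec v = v ↔
        ∃ w : Fin r → ℝ, v = V₁.mulVec w := by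
  have hV₂₁ : V₂ᵀ * V₁ = 0 := by
    have := congrArg Matrix.transpose hV₁₂
    simpa [Matrix.transpose_mul] using this
  intro v
  constructor
  · intro h
    have hS : V₂ᵀ * (V₁ * V₁ᵀ + V₂ * Eᵀ * E * V₂ᵀ) = Eᵀ * E * V₂ᵀ := by
      simp only [Matrix.mul_add, ← Matrix.mul_assoc, hV₂₁, hV₂, Matrix.zero_mul,
        Matrix.one_mul, zero_add]
    have hx : (Eᵀ * E) *ᵥ (V₂ᵀ *ᵥ v) = V₂ᵀ *ᵥ v := by
      conv_rhs => rw [← h]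
      rw [Matrix.mulVec_mulVec, Matrix.mulVec_mulVec, hS]
    have hx0 : V₂ᵀ *ᵥ v = 0 := contract_fixed E hE _ hx
    refine ⟨V₁ᵀ *ᵥ v, ?_⟩
    have := h
    rw [Matrix.add_mulVec] at this
    have h2 : (V₂ * Eᵀ * E * V₂ᵀ) *ᵥ v = 0 := by
      rw [← Matrix.mulVec_mulVec, hx0, Matrix.mulVec_zero]
    rw [h2, add_zero, ← Matrix.mulVec_mulVec] at this
    exact this.symm
  · rintro ⟨w, rfl⟩
    rw [Matrix.mulVec_mulVec]
    have : (V₁ * V₁ᵀ + V₂ * Eᵀ * E * V₂ᵀ) * V₁ = V₁ := by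
      rw [Matrix.add_mul, Matrix.mul_assoc V₁ V₁ᵀ V₁, hV₁, Matrix.mul_one,
        Matrix.mul_assoc _ V₂ᵀ V₁, hV₂₁, Matrix.mul_zero, add_zero]
    rw [this]
end

section
/- Multiclass convolution output recovery (core of Theorem 6): let V₁ ∈ ℝ^{mp×r} satisfy V₁ᵀV₁ = I_r, let V₂ ∈ ℝ^{mp×s} satisfy V₁ᵀV₂ = 0, let U₁ ∈ ℝ^{d×r}, U₂ ∈ ℝ^{d×t}, E ∈ ℝ^{t×s} be arbitrary, and let Φ₁,…,Φₙ ∈ ℝ^{d×p} and β_{k,j} ∈ ℝ (k ∈ {1,…,m}, j ∈ {1,…,n}) satisfy Σⱼ Σₖ β_{k,j} (Φⱼ)'ₖ = U₁V₁ᵀ + U₂EV₂ᵀ. Then for every i ∈ {1,…,n}: ΦᵢᵀU₁ = Σⱼ Σₖ β_{k,j} Rₖ(ΦᵢᵀΦⱼ) V₁, where Rₖ(ΦᵢᵀΦⱼ) ∈ ℝ^{p×mp} is the row-block embedding of ΦᵢᵀΦⱼ in the k-th block of columns. (With β_{k,j} = α̂'_{k,j} and K(xᵢ,xⱼ) = ΦᵢᵀΦⱼ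 this is Φ(xᵢ)ᵀÛ₁ = Σⱼ Σₖ α̂'_{k,j} [0_{p×(k−1)p}, K(xᵢ,xⱼ), 0_{p×(m−k)p}] V̂₁.) -/
open Matrix

/-- Block embedding `Φ'ₖ ∈ ℝ^{d×mp}` of `Φ ∈ ℝ^{d×p}`: columns indexed by pairs
`(a, j)`, with `(Φ'ₖ)_{i,(a,j)} = Φ_{ij}` if `a = k` and `0` otherwise. -/
def blockEmbed {d p m : ℕ} (k : Fin m) (Φ : Matrix (Fin d) (Fin p) ℝ) :
    Matrix (Fin d) (Fin m × Fin p) ℝ :=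
  Matrix.of fun i aj => if aj.1 = k then Φ i aj.2 else 0

/-- Block-diagonal embedding `K'ₖ(M) ∈ ℝ^{mp×mp}` of `M ∈ ℝ^{p×p}`: the matrix with
`M` in the `k`-th `p×p` diagonal block and zeros elsewhere. -/
def blockDiagEmbed {p m : ℕ} (k : Fin m) (M : Matrix (Fin p) (Fin p) ℝ) :
    Matrix (Fin m × Fin p) (Fin m × Fin p) ℝ :=
  Matrix.of fun aj bj' => if aj.1 = k ∧ bj'.1 = k then M aj.2 bj'.2 else 0

/-- Row-block embedding `Rₖ(M) = [0_{p×(k−1)p}, M, 0_{p×(m−k)p}] ∈ ℝ^{p×mp}` of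
`M ∈ ℝ^{p×p}`: columns indexed by pairs `(a, j')`, with entry `M_{j j'}` if `a = k`
and `0` otherwise. -/
def rowBlockEmbed {p m : ℕ} (k : Fin m) (M : Matrix (Fin p) (Fin p) ℝ) :
    Matrix (Fin p) (Fin m × Fin p) ℝ :=
  Matrix.of fun j aj' => if aj'.1 = k then M j aj'.2 else 0

lemma mul_blockEmbed {d p m : ℕ} (k : Fin m) (A : Matrix (Fin p) (Fin d) ℝ)
    (B : Matrix (Fin d) (Fin p) ℝ) :
    A * blockEmbed k B = rowBlockEmbed k (A * B) := by
  ext j aj'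
  simp only [mul_apply, blockEmbed, rowBlockEmbed, Matrix.of_apply]
  split <;> simp

/-- multiclass convolution output recovery: if
`Σⱼ Σₖ β_{k,j} (Φⱼ)'ₖ = U₁V₁ᵀ + U₂EV₂ᵀ` with `V₁ᵀV₁ = I` and `V₁ᵀV₂ = 0`, then
`ΦᵢᵀU₁ = Σⱼ Σₖ β_{k,j} Rₖ(ΦᵢᵀΦⱼ) V₁` for every `i`. -/
theorem multiclass_conv_output_recovery (d p r s t n m : ℕ)
    (V₁ : Matrix (Fin m × Fin p) (Fin r) ℝ) (hV₁ : V₁ᵀ * V₁ = 1)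
    (V₂ : Matrix (Fin m × Fin p) (Fin s) ℝ) (hV₁₂ : V₁ᵀ * V₂ = 0)
    (U₁ : Matrix (Fin d) (Fin r) ℝ) (U₂ : Matrix (Fin d) (Fin t) ℝ)
    (E : Matrix (Fin t) (Fin s) ℝ)
    (Φ : Fin n → Matrix (Fin d) (Fin p) ℝ) (β : Fin m → Fin n → ℝ)
    (hsum : ∑ j, ∑ k, β k j • blockEmbed k (Φ j) = U₁ * V₁ᵀ + U₂ * E * V₂ᵀ) :
    ∀ i : Fin n,
      (Φ i)ᵀ * U₁ = ∑ j, ∑ k, β k j • (rowBlockEmbed k ((Φ i)ᵀ * Φ j) * V₁) := by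
  intro i
  have key : (Φ i)ᵀ * (∑ j, ∑ k, β k j • blockEmbed k (Φ j)) * V₁
      = ∑ j, ∑ k, β k j • (rowBlockEmbed k ((Φ i)ᵀ * Φ j) * V₁) := by
    rw [Matrix.mul_sum, Matrix.sum_mul]
    refine Finset.sum_congr rfl fun j _ => ?_
    rw [Matrix.mul_sum, Matrix.sum_mul]
    refine Finset.sum_congr rfl fun k _ => ?_
    rw [Matrix.mul_smul, Matrix.smul_mul, mul_blockEmbed]
  rw [hsum] at key
  rw [← key]
  have h2 : V₂ᵀ * V₁ = 0 := by
    have := congrArg Matrix.transpose hV₁₂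
    simpa using this
  simp [Matrix.mul_add, Matrix.add_mul, Matrix.mul_assoc, hV₁, h2]
end
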